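/- In the Yokonuma–Hecke algebra Y, Juyumaya's generators satisfy the braid relations: L_i L_j L_i = L_j L_i L_j whenever |i−j| = 1, and L_i L_j = L_j L_i whenever |i−j| ≥ 2. -/

import Mathlib

noncomputable section

/-- The product-of-coordinates homomorphism `(Fin m → Fˣ) →* Fˣ`. -/
def prodHom (m : ℕ) (F : Type*) [Field F] : (Fin m → Fˣ) →* Fˣ :=
  MonoidHom.mk' (fun f => ∏ i, f i) (by
    intro a b
    simp [Finset.prod_mul_distrib])

/-- The diagonal torus `T` of `SL_{n+1}(F)`: tuples in `Fˣ` with product `1`,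
as a subgroup of `Fin (n+1) → Fˣ`. -/
def TGrp (n : ℕ) (F : Type*) [Field F] : Subgroup (Fin (n + 1) → Fˣ) :=
  (prodHom (n + 1) F).ker

/-- The action of the adjacent transposition `s_i` on the diagonal torus, exchanging
the `i`-th and `(i+1)`-st diagonal entries. -/
def sAct {n : ℕ} {F : Type*} [Field F] (i : Fin n) (t : TGrp n F) : TGrp n F :=
  ⟨fun j => t.1 (Equiv.swap i.castSucc i.succ j), by
    have h : ∏ j, t.1 j = 1 := t.2
    have := Equiv.prod_comp (Equiv.swap i.castSucc i.succ) t.1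
    simp only [TGrp, MonoidHom.mem_ker, prodHom, MonoidHom.mk'_apply]
    rw [this, h]⟩

/-- `h_i(r)`: the diagonal matrix with `r` in position `i`, `r⁻¹` in position `i+1`,
and `1` elsewhere. -/
def hElem {n : ℕ} {F : Type*} [Field F] [DecidableEq F] (i : Fin n) (r : Fˣ) :
    TGrp n F :=
  ⟨Pi.mulSingle i.castSucc r * Pi.mulSingle i.succ r⁻¹, by
    simp only [TGrp, MonoidHom.mem_ker, prodHom, MonoidHom.mk'_apply, Pi.mul_apply,
      Finset.prod_mul_distrib]
    rw [Finset.prod_pi_mulSingle', Finset.prod_pi_mulSingle']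
    simp⟩

/-- The generator `R_i` in the free algebra, for `i` a simple reflection. -/
def yR (n : ℕ) (F : Type*) [Field F] (i : Fin n) :
    FreeAlgebra ℂ (Fin n ⊕ ↥(TGrp n F)) :=
  FreeAlgebra.ι ℂ (Sum.inl i)

/-- The generator `R_t` in the free algebra, for `t` in the diagonal torus. -/
def yT (n : ℕ) (F : Type*) [Field F] (t : TGrp n F) :
    FreeAlgebra ℂ (Fin n ⊕ ↥(TGrp n F)) :=
  FreeAlgebra.ι ℂ (Sum.inr t)

/-- Defining relations of the Yokonuma–Hecke algebra, with `Q = |F|`,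
`H_i(r) = R_{h_i(r)}` and `E_i = Σ_{r ∈ F^×} H_i(r)`. -/
inductive YRel (n : ℕ) (F : Type*) [Field F] [Fintype F] [DecidableEq F] :
    FreeAlgebra ℂ (Fin n ⊕ ↥(TGrp n F)) → FreeAlgebra ℂ (Fin n ⊕ ↥(TGrp n F)) → Prop
  | comm (i j : Fin n) (h : 2 ≤ Nat.dist i j) :
      YRel n F (yR n F i * yR n F j) (yR n F j * yR n F i)
  | braid (i j : Fin n) (h : Nat.dist i j = 1) :
      YRel n F (yR n F i * yR n F j * yR n F i) (yR n F j * yR n F i * yR n F j)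
  | t_comm (t : TGrp n F) (i : Fin n) :
      YRel n F (yT n F t * yR n F i) (yR n F i * yT n F (sAct i t))
  | t_mul (t t' : TGrp n F) :
      YRel n F (yT n F t * yT n F t') (yT n F (t * t'))
  | t_one : YRel n F (yT n F 1) 1
  | quad (i : Fin n) :
      YRel n F (yR n F i * yR n F i)
        ((Fintype.card F : ℂ) • yT n F (hElem i (-1)) +
          yR n F i * ∑ r : Fˣ, yT n F (hElem i r))

/-- The Yokonuma–Hecke algebra `Y`. -/
abbrev Yok (n : ℕ) (F : Type*) [Field F] [Fintype F] [DecidableEq F] :=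
  RingQuot (YRel n F)

/-- The standard generator `R_i` of `Y`. -/
noncomputable def yokR (n : ℕ) (F : Type*) [Field F] [Fintype F] [DecidableEq F]
    (i : Fin n) : Yok n F :=
  RingQuot.mkAlgHom ℂ (YRel n F) (yR n F i)

/-- The standard generator `R_t` of `Y`. -/
noncomputable def yokT (n : ℕ) (F : Type*) [Field F] [Fintype F] [DecidableEq F]
    (t : TGrp n F) : Yok n F :=
  RingQuot.mkAlgHom ℂ (YRel n F) (yT n F t)

/-- `E_i = Σ_{r ∈ F^×} H_i(r) ∈ Y`, where `H_i(r) = R_{h_i(r)}`. -/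
noncomputable def yokE (n : ℕ) (F : Type*) [Field F] [Fintype F] [DecidableEq F]
    (i : Fin n) : Yok n F :=
  ∑ r : Fˣ, yokT n F (hElem i r)

/-- Juyumaya's generator `L_i = Q⁻¹(E_i + R_i Ψ_i)`, where
`Ψ_i = Σ_{r ∈ F^×} ψ(r) H_i(r)`. -/
noncomputable def yokL (n : ℕ) (F : Type*) [Field F] [Fintype F] [DecidableEq F]
    (ψ : F → ℂ) (i : Fin n) : Yok n F :=
  (Fintype.card F : ℂ)⁻¹ •
    (yokE n F i + yokR n F i * ∑ r : Fˣ, ψ (r : F) • yokT n F (hElem i r))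

section Aux
variable {n : ℕ} {F : Type} [Field F] [Fintype F] [DecidableEq F]

lemma yokT_mul (t t' : TGrp n F) : yokT n F t * yokT n F t' = yokT n F (t * t') := by
  rw [yokT, yokT, yokT, ← map_mul]
  exact RingQuot.mkAlgHom_rel ℂ (YRel.t_mul t t')

lemma yokT_comm (t t' : TGrp n F) : yokT n F t * yokT n F t' = yokT n F t' * yokT n F t := by
  rw [yokT_mul, yokT_mul, mul_comm]

lemma yokT_R (t : TGrp n F) (i : Fin n) :
    yokT n F t * yokR n F i = yokR n F i * yokT n F (sAct i t) := by
  rw [yokT, yokR, yokT, ← map_mul, ← map_mul]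
  exact RingQuot.mkAlgHom_rel ℂ (YRel.t_comm t i)

lemma yokR_comm {i j : Fin n} (h : 2 ≤ Nat.dist i j) :
    yokR n F i * yokR n F j = yokR n F j * yokR n F i := by
  simp only [yokR, ← map_mul]
  exact RingQuot.mkAlgHom_rel ℂ (YRel.comm i j h)

lemma yokR_braid {i j : Fin n} (h : Nat.dist i j = 1) :
    yokR n F i * yokR n F j * yokR n F i = yokR n F j * yokR n F i * yokR n F j := by
  simp only [yokR, ← map_mul]
  exact RingQuot.mkAlgHom_rel ℂ (YRel.braid i j h)

lemma yokR_quad (i : Fin n) :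
    yokR n F i * yokR n F i =
      (Fintype.card F : ℂ) • yokT n F (hElem i (-1)) +
        yokR n F i * ∑ r : Fˣ, yokT n F (hElem i r) := by
  have := RingQuot.mkAlgHom_rel ℂ (YRel.quad (n := n) (F := F) i)
  rw [map_mul, map_add, map_smul, map_mul, map_sum] at this
  exact this

end Aux
set_option linter.unusedSectionVars false
section Torus
variable {n : ℕ} {F : Type} [Field F] [Fintype F] [DecidableEq F]

lemma hElem_coe (i : Fin n) (r : Fˣ) :
    ((hElem i r : TGrp n F) : Fin (n+1) → Fˣ) =
      Pi.mulSingle i.castSucc r * Pi.mulSingle i.succ r⁻¹ := rfl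

lemma sAct_coe (i : Fin n) (t : TGrp n F) :
    ((sAct i t : TGrp n F) : Fin (n+1) → Fˣ) =
      fun k => (t : Fin (n+1) → Fˣ) (Equiv.swap i.castSucc i.succ k) := rfl

lemma hElem_one (i : Fin n) : (hElem i 1 : TGrp n F) = 1 := by
  apply Subtype.ext
  rw [hElem_coe]
  simp

lemma hElem_mul (i : Fin n) (a b : Fˣ) :
    (hElem i a : TGrp n F) * hElem i b = hElem i (a * b) := by
  apply Subtype.ext
  show (hElem i a : Fin (n+1) → Fˣ) * (hElem i b : Fin (n+1) → Fˣ) = _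
  rw [hElem_coe, hElem_coe, hElem_coe]
  have h : i.castSucc ≠ i.succ := ne_of_lt (Fin.castSucc_lt_succ : i.castSucc < i.succ)
  funext k
  simp only [Pi.mul_apply, Pi.mulSingle_apply]
  split_ifs <;> simp_all [mul_comm]

lemma sAct_mul (i : Fin n) (t t' : TGrp n F) :
    sAct i (t * t') = sAct i t * sAct i t' := rfl

-- value description of hElem
lemma hElem_apply (i : Fin n) (r : Fˣ) (k : Fin (n+1)) :
    (hElem i r : TGrp n F).1 k =
      if k = i.castSucc then r else if k = i.succ then r⁻¹ else 1 := by
  rw [hElem_coe]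
  have h : i.castSucc ≠ i.succ := ne_of_lt (Fin.castSucc_lt_succ : i.castSucc < i.succ)
  simp only [Pi.mul_apply, Pi.mulSingle_apply]
  split_ifs <;> simp_all

lemma sAct_hElem_self (i : Fin n) (r : Fˣ) :
    sAct i (hElem i r : TGrp n F) = hElem i r⁻¹ := by
  apply Subtype.ext
  funext k
  have h : i.castSucc ≠ i.succ := ne_of_lt (Fin.castSucc_lt_succ : i.castSucc < i.succ)
  show (hElem i r : TGrp n F).1 (Equiv.swap i.castSucc i.succ k) = (hElem i r⁻¹ : TGrp n F).1 k
  rw [hElem_apply, hElem_apply]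
  rcases eq_or_ne k i.castSucc with hk | hk
  · subst hk; rw [Equiv.swap_apply_left]; simp [h.symm]
  · rcases eq_or_ne k i.succ with hk2 | hk2
    · subst hk2; rw [Equiv.swap_apply_right]; simp [h, hk]
    · rw [Equiv.swap_apply_of_ne_of_ne hk hk2]; simp [hk, hk2]

end Torus
set_option linter.unusedSectionVars false
section Adjacent
variable {n : ℕ} {F : Type} [Field F] [Fintype F] [DecidableEq F]

/-- the torus element diag(a, a⁻¹b, b⁻¹) supported at positions i,i+1,i+2 -/
def tau (i j : Fin n) (a b : Fˣ) : TGrp n F := hElem i a * hElem j b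

lemma tau_mul (i j : Fin n) (a b c d : Fˣ) :
    (tau i j a b : TGrp n F) * tau i j c d = tau i j (a*c) (b*d) := by
  rw [tau, tau, tau, ← hElem_mul, ← hElem_mul]
  rw [mul_assoc, ← mul_assoc (hElem j b), mul_comm (hElem j b) (hElem i c), mul_assoc, mul_assoc]

variable {i j : Fin n} (hij : (j : ℕ) = (i : ℕ) + 1)

section adj
include hij

lemma succ_eq_castSucc : i.succ = j.castSucc := by
  apply Fin.ext; simp [hij]

lemma p12 : i.castSucc ≠ i.succ := ne_of_lt (Fin.castSucc_lt_succ : i.castSucc < i.succ)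
lemma p13 : i.castSucc ≠ j.succ := by
  apply Fin.ne_of_val_ne; simp [hij]; omega
lemma p23 : i.succ ≠ j.succ := by
  apply Fin.ne_of_val_ne; simp [hij]
lemma p12' : i.castSucc ≠ j.castSucc := by
  apply Fin.ne_of_val_ne; simp [hij]

lemma tau_apply (a b : Fˣ) (k : Fin (n+1)) :
    (tau i j a b : TGrp n F).1 k =
      if k = i.castSucc then a else if k = i.succ then a⁻¹ * b
        else if k = j.succ then b⁻¹ else 1 := by
  show (hElem i a : TGrp n F).1 k * (hElem j b : TGrp n F).1 k = _
  rw [hElem_apply, hElem_apply, ← succ_eq_castSucc hij]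
  have h1 := p12 (i := i) (j := j) hij
  have h2 := p13 (i := i) (j := j) hij
  have h3 := p23 (i := i) (j := j) hij
  split_ifs <;> simp_all

lemma sAct_i_tau (a b : Fˣ) :
    sAct i (tau i j a b : TGrp n F) = tau i j (a⁻¹ * b) b := by
  have h1 := p12 (i := i) (j := j) hij
  have h2 := p13 (i := i) (j := j) hij
  have h3 := p23 (i := i) (j := j) hij
  have hji : j ≠ i := by apply Fin.ne_of_val_ne; omega
  apply Subtype.ext
  funext k
  show (tau i j a b : TGrp n F).1 (Equiv.swap i.castSucc i.succ k) = _
  rw [tau_apply hij]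
  rcases eq_or_ne k i.castSucc with hk | hk
  · subst hk
    rw [Equiv.swap_apply_left, tau_apply hij]
    simp [h1, h1.symm, hji, mul_comm]
  · rcases eq_or_ne k i.succ with hk2 | hk2
    · subst hk2
      rw [Equiv.swap_apply_right, tau_apply hij]
      simp [h1, h1.symm, h3, hji, mul_comm]
    · rw [Equiv.swap_apply_of_ne_of_ne hk hk2, tau_apply hij]
      simp [hk, hk2]

lemma sAct_j_tau (a b : Fˣ) :
    sAct j (tau i j a b : TGrp n F) = tau i j a (a * b⁻¹) := by
  have h1 := p12 (i := i) (j := j) hij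
  have h2 := p13 (i := i) (j := j) hij
  have h3 := p23 (i := i) (j := j) hij
  have h4 := p12' (i := i) (j := j) hij
  have e := succ_eq_castSucc (i := i) (j := j) hij
  have hji : j ≠ i := by apply Fin.ne_of_val_ne; omega
  apply Subtype.ext
  funext k
  show (tau i j a b : TGrp n F).1 (Equiv.swap j.castSucc j.succ k) = _
  rw [tau_apply hij]
  rcases eq_or_ne k j.castSucc with hk | hk
  · subst hk
    rw [Equiv.swap_apply_left, tau_apply hij]
    rw [← e]
    simp [h1, h3, h1.symm, h2.symm, h3.symm, hji, mul_comm]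
  · rcases eq_or_ne k j.succ with hk2 | hk2
    · subst hk2
      rw [Equiv.swap_apply_right, tau_apply hij]
      rw [← e]
      simp [h2.symm, h3.symm, h1, h1.symm, hji, mul_comm]
    · rw [Equiv.swap_apply_of_ne_of_ne hk hk2, tau_apply hij]
      rw [← e] at hk
      simp [hk, hk2]

end adj
end Adjacent
section YokAdj
variable (n : ℕ) (F : Type) [Field F] [Fintype F] [DecidableEq F]

def tauY (i j : Fin n) (a b : Fˣ) : Yok n F := yokT n F (tau i j a b)

def TfD (i j : Fin n) (f : Fˣ → Fˣ → ℂ) : Yok n F :=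
  ∑ p : Fˣ × Fˣ, f p.1 p.2 • tauY n F i j p.1 p.2

def convD (f g : Fˣ → Fˣ → ℂ) : Fˣ → Fˣ → ℂ :=
  fun a b => ∑ p : Fˣ × Fˣ, f p.1 p.2 * g (p.1⁻¹ * a) (p.2⁻¹ * b)

def sigD (f : Fˣ → Fˣ → ℂ) : Fˣ → Fˣ → ℂ := fun a b => f (a⁻¹ * b) b
def rhoD (f : Fˣ → Fˣ → ℂ) : Fˣ → Fˣ → ℂ := fun a b => f a (a * b⁻¹)

variable {n F}
variable {i j : Fin n} (hij : (j : ℕ) = (i : ℕ) + 1)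

include hij

lemma tauY_mul (a b c d : Fˣ) :
    tauY n F i j a b * tauY n F i j c d = tauY n F i j (a*c) (b*d) := by
  rw [tauY, tauY, tauY, yokT_mul, tau_mul]

lemma tauY_R (a b : Fˣ) :
    tauY n F i j a b * yokR n F i = yokR n F i * tauY n F i j (a⁻¹ * b) b := by
  rw [tauY, tauY, yokT_R, sAct_i_tau hij]

lemma tauY_S (a b : Fˣ) :
    tauY n F i j a b * yokR n F j = yokR n F j * tauY n F i j a (a * b⁻¹) := by
  rw [tauY, tauY, yokT_R, sAct_j_tau hij]

lemma Tf_mul (f g : Fˣ → Fˣ → ℂ) :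
    TfD n F i j f * TfD n F i j g = TfD n F i j (convD F f g) := by
  rw [TfD, TfD, TfD, Finset.sum_mul_sum]
  have step : ∀ p : Fˣ × Fˣ,
      (∑ q : Fˣ × Fˣ, (f p.1 p.2 • tauY n F i j p.1 p.2) * (g q.1 q.2 • tauY n F i j q.1 q.2)) =
      ∑ r : Fˣ × Fˣ, (f p.1 p.2 * g (p.1⁻¹ * r.1) (p.2⁻¹ * r.2)) • tauY n F i j r.1 r.2 := by
    intro p
    refine Fintype.sum_equiv (Equiv.prodCongr (Equiv.mulLeft p.1) (Equiv.mulLeft p.2)) _ _ ?_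
    intro q
    rw [smul_mul_smul_comm, tauY_mul hij]
    simp
  rw [Finset.sum_congr rfl fun p _ => step p, Finset.sum_comm]
  refine Finset.sum_congr rfl fun r _ => ?_
  rw [convD, Finset.sum_smul]

lemma Tf_R (f : Fˣ → Fˣ → ℂ) :
    TfD n F i j f * yokR n F i = yokR n F i * TfD n F i j (sigD F f) := by
  rw [TfD, TfD, Finset.sum_mul, Finset.mul_sum]
  refine Fintype.sum_equiv
    (⟨fun p => (p.1⁻¹ * p.2, p.2), fun p => (p.1⁻¹ * p.2, p.2),
      fun p => by ext <;> simp [mul_comm, mul_assoc],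
      fun p => by ext <;> simp [mul_comm, mul_assoc]⟩ : Fˣ × Fˣ ≃ Fˣ × Fˣ) _ _ ?_
  intro p
  have key : (p.1⁻¹ * p.2)⁻¹ * p.2 = p.1 := by simp [mul_inv_rev, mul_comm, mul_assoc]
  rw [smul_mul_assoc, tauY_R hij, mul_smul_comm]
  simp only [Equiv.coe_fn_mk, sigD, key]

lemma Tf_S (f : Fˣ → Fˣ → ℂ) :
    TfD n F i j f * yokR n F j = yokR n F j * TfD n F i j (rhoD F f) := by
  rw [TfD, TfD, Finset.sum_mul, Finset.mul_sum]
  refine Fintype.sum_equiv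
    (⟨fun p => (p.1, p.1 * p.2⁻¹), fun p => (p.1, p.1 * p.2⁻¹),
      fun p => by ext <;> simp [mul_comm, mul_assoc],
      fun p => by ext <;> simp [mul_comm, mul_assoc]⟩ : Fˣ × Fˣ ≃ Fˣ × Fˣ) _ _ ?_
  intro p
  have key : p.1 * (p.1 * p.2⁻¹)⁻¹ = p.2 := by simp [mul_inv_rev, mul_comm, mul_assoc]
  rw [smul_mul_assoc, tauY_S hij, mul_smul_comm]
  simp only [Equiv.coe_fn_mk, rhoD, key]

end YokAdj
section Coeffs
variable {n : ℕ} (F : Type) [Field F] [Fintype F] [DecidableEq F]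

def Uf : Fˣ → Fˣ → ℂ := fun _ b => if b = 1 then 1 else 0
def Vf : Fˣ → Fˣ → ℂ := fun a _ => if a = 1 then 1 else 0
def Pf (ψ : F → ℂ) : Fˣ → Fˣ → ℂ := fun a b => if b = 1 then ψ (a : F) else 0
def Wf (ψ : F → ℂ) : Fˣ → Fˣ → ℂ := fun a b => if a = 1 then ψ (b : F) else 0
def dRf : Fˣ → Fˣ → ℂ := fun a b => if a = -1 then if b = 1 then 1 else 0 else 0
def dSf : Fˣ → Fˣ → ℂ := fun a b => if a = 1 then if b = -1 then 1 else 0 else 0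

variable {F}
variable {i j : Fin n} (ψ : F → ℂ)

lemma tau_right_one (a : Fˣ) : (tau i j a 1 : TGrp n F) = hElem i a := by
  rw [tau, hElem_one, mul_one]
lemma tau_left_one (b : Fˣ) : (tau i j 1 b : TGrp n F) = hElem j b := by
  rw [tau, hElem_one, one_mul]

lemma TfU : TfD n F i j (Uf F) = yokE n F i := by
  rw [TfD, yokE, Fintype.sum_prod_type]
  simp only [Uf, ite_smul, one_smul, zero_smul, Finset.sum_ite_eq', Finset.mem_univ, if_true]
  exact Finset.sum_congr rfl fun a _ => by simp only [tauY]; rw [tau_right_one]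

lemma TfV : TfD n F i j (Vf F) = yokE n F j := by
  rw [TfD, yokE, Fintype.sum_prod_type_right]
  simp only [Vf, ite_smul, one_smul, zero_smul, Finset.sum_ite_eq', Finset.mem_univ, if_true]
  exact Finset.sum_congr rfl fun b _ => by simp only [tauY]; rw [tau_left_one]

lemma TfP : TfD n F i j (Pf F ψ) = ∑ r : Fˣ, ψ (r : F) • yokT n F (hElem i r) := by
  rw [TfD, Fintype.sum_prod_type]
  simp only [Pf, ite_smul, zero_smul, Finset.sum_ite_eq', Finset.mem_univ, if_true]
  exact Finset.sum_congr rfl fun a _ => by simp only [tauY]; rw [tau_right_one]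

lemma TfW : TfD n F i j (Wf F ψ) = ∑ r : Fˣ, ψ (r : F) • yokT n F (hElem j r) := by
  rw [TfD, Fintype.sum_prod_type_right]
  simp only [Wf, ite_smul, zero_smul, Finset.sum_ite_eq', Finset.mem_univ, if_true]
  exact Finset.sum_congr rfl fun b _ => by simp only [tauY]; rw [tau_left_one]

lemma TfdR : TfD n F i j (dRf F) = yokT n F (hElem i (-1)) := by
  rw [TfD, Fintype.sum_prod_type]
  simp only [dRf, ite_smul, one_smul, zero_smul, Finset.sum_ite_irrel, Finset.sum_const_zero,
    Finset.sum_ite_eq', Finset.mem_univ, if_true]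
  simp only [tauY]; rw [tau_right_one]

lemma TfdS : TfD n F i j (dSf F) = yokT n F (hElem j (-1)) := by
  rw [TfD, Fintype.sum_prod_type_right]
  simp only [dSf, ite_smul, one_smul, zero_smul, Finset.sum_ite_irrel, Finset.sum_const_zero,
    Finset.sum_ite_eq', Finset.mem_univ, if_true]
  simp only [tauY]; rw [tau_left_one]

lemma RRe : yokR n F i * yokR n F i =
    (Fintype.card F : ℂ) • TfD n F i j (dRf F) + yokR n F i * TfD n F i j (Uf F) := by
  rw [TfdR, TfU]; exact yokR_quad i

lemma SSe : yokR n F j * yokR n F j =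
    (Fintype.card F : ℂ) • TfD n F i j (dSf F) + yokR n F j * TfD n F i j (Vf F) := by
  rw [TfdS, TfV]; exact yokR_quad j

end Coeffs

section Rot
variable {n : ℕ} {F : Type} [Field F] [Fintype F] [DecidableEq F]
variable {i j : Fin n} (hij : (j : ℕ) = (i : ℕ) + 1)
include hij

lemma TfTz (f g : Fˣ → Fˣ → ℂ) (z : Yok n F) :
    TfD n F i j f * (TfD n F i j g * z) = TfD n F i j (convD F f g) * z := by
  rw [← mul_assoc, Tf_mul hij]

lemma TfRz (f : Fˣ → Fˣ → ℂ) (z : Yok n F) :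
    TfD n F i j f * (yokR n F i * z) = yokR n F i * (TfD n F i j (sigD F f) * z) := by
  rw [← mul_assoc, Tf_R hij, mul_assoc]

lemma TfSz (f : Fˣ → Fˣ → ℂ) (z : Yok n F) :
    TfD n F i j f * (yokR n F j * z) = yokR n F j * (TfD n F i j (rhoD F f) * z) := by
  rw [← mul_assoc, Tf_S hij, mul_assoc]

lemma distIJ : Nat.dist (i : ℕ) (j : ℕ) = 1 := by rw [hij, Nat.dist]; omega

lemma braidz (z : Yok n F) :
    yokR n F j * (yokR n F i * (yokR n F j * z)) =
      yokR n F i * (yokR n F j * (yokR n F i * z)) := by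
  have hb : yokR n F j * yokR n F i * yokR n F j = yokR n F i * yokR n F j * yokR n F i :=
    yokR_braid (by rw [Nat.dist_comm]; exact distIJ hij)
  simp only [← mul_assoc]
  rw [hb]

lemma RRz (z : Yok n F) :
    yokR n F i * (yokR n F i * z) =
      (Fintype.card F : ℂ) • (TfD n F i j (dRf F) * z) +
        yokR n F i * (TfD n F i j (Uf F) * z) := by
  rw [← mul_assoc, RRe, add_mul, smul_mul_assoc, mul_assoc]

lemma SSz (z : Yok n F) :
    yokR n F j * (yokR n F j * z) =
      (Fintype.card F : ℂ) • (TfD n F i j (dSf F) * z) +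
        yokR n F j * (TfD n F i j (Vf F) * z) := by
  rw [← mul_assoc, SSe, add_mul, smul_mul_assoc, mul_assoc]

end Rot
section Psi
variable {F : Type} [Field F] [Fintype F] [DecidableEq F]
variable {ψ : F → ℂ} (hψadd : ∀ a b, ψ (a + b) = ψ a * ψ b)
  (hψne : ∀ a, ψ a ≠ 0) (hψnt : ∃ a, ψ a ≠ 1)

lemma sum_mulLeft (u : Fˣ) (g : Fˣ → ℂ) : ∑ c : Fˣ, g (u * c) = ∑ c : Fˣ, g c :=
  Fintype.sum_equiv (Equiv.mulLeft u) _ _ (fun _ => rfl)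

lemma sum_mulRight (u : Fˣ) (g : Fˣ → ℂ) : ∑ c : Fˣ, g (c * u) = ∑ c : Fˣ, g c :=
  Fintype.sum_equiv (Equiv.mulRight u) _ _ (fun _ => rfl)

lemma sum_inv_mulRight (u : Fˣ) (g : Fˣ → ℂ) :
    ∑ c : Fˣ, g (c⁻¹ * u) = ∑ c : Fˣ, g c :=
  Fintype.sum_equiv ((Equiv.inv Fˣ).trans (Equiv.mulRight u)) _ _ (fun _ => rfl)

lemma sum_inv (g : Fˣ → ℂ) : ∑ c : Fˣ, g c⁻¹ = ∑ c : Fˣ, g c :=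
  Fintype.sum_equiv (Equiv.inv Fˣ) _ _ (fun _ => rfl)

include hψadd hψne in
lemma psi_zero : ψ 0 = 1 := by
  have h : ψ 0 * 1 = ψ 0 * ψ 0 := by rw [mul_one]; rw [← hψadd, add_zero]
  exact (mul_left_cancel₀ (hψne 0) h).symm

include hψadd hψnt in
lemma psi_sum_F : ∑ x : F, ψ x = 0 := by
  obtain ⟨a, ha⟩ := hψnt
  have h : ψ a * ∑ x : F, ψ x = ∑ x : F, ψ x := by
    rw [Finset.mul_sum]
    exact (Fintype.sum_equiv (Equiv.addLeft (-a)) _ _ (fun x => by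
      simp only [Equiv.coe_addLeft]
      rw [← hψadd]
      ring_nf)).symm
  have h2 : (ψ a - 1) * ∑ x : F, ψ x = 0 := by linear_combination h
  rcases mul_eq_zero.1 h2 with h3 | h3
  · exact absurd (by linear_combination h3) ha
  · exact h3

lemma sum_units_eq : ∑ c : Fˣ, ψ (c : F) = ∑ x ∈ Finset.univ.erase (0:F), ψ x := by
  refine Finset.sum_bij' (fun (c : Fˣ) _ => (c : F))
    (fun x hx => Units.mk0 x (Finset.mem_erase.1 hx).1) ?_ ?_ ?_ ?_ ?_
  · intros c _; exact Finset.mem_erase.2 ⟨Units.ne_zero c, Finset.mem_univ _⟩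
  · intros; simp
  · intros; simp
  · intros; simp
  · intros; rfl

include hψadd hψne hψnt in
lemma psi_sum : ∑ c : Fˣ, ψ (c : F) = -1 := by
  have key := Finset.add_sum_erase Finset.univ ψ (Finset.mem_univ (0:F))
  rw [psi_sum_F hψadd hψnt, psi_zero hψadd hψne] at key
  rw [sum_units_eq]
  linear_combination key

end Psi
section Eval
variable {F : Type} [Field F] [Fintype F] [DecidableEq F] (ψ : F → ℂ)

lemma sig_U : sigD F (Uf F) = Uf F := rfl
lemma rho_V : rhoD F (Vf F) = Vf F := rfl

lemma sig_rho_U : sigD F (rhoD F (Uf F)) = Vf F := by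
  funext x y
  simp only [sigD, rhoD, Uf, Vf]
  rw [show x⁻¹ * y * y⁻¹ = x⁻¹ by group]
  simp only [inv_eq_one]

lemma rho_sig_V : rhoD F (sigD F (Vf F)) = Uf F := by
  funext x y
  simp only [sigD, rhoD, Vf, Uf]
  rw [show x⁻¹ * (x * y⁻¹) = y⁻¹ by group]
  simp only [inv_eq_one]

lemma sig_rho_P : sigD F (rhoD F (Pf F ψ)) = Wf F ψ := by
  funext x y
  simp only [sigD, rhoD, Pf, Wf]
  rw [show x⁻¹ * y * y⁻¹ = x⁻¹ by group]
  simp only [inv_eq_one]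
  split_ifs with h
  · subst h; rw [inv_one, one_mul]
  · rfl

lemma rho_sig_W : rhoD F (sigD F (Wf F ψ)) = Pf F ψ := by
  funext x y
  simp only [sigD, rhoD, Wf, Pf]
  rw [show x⁻¹ * (x * y⁻¹) = y⁻¹ by group]
  simp only [inv_eq_one]
  split_ifs with h
  · subst h; rw [inv_one, mul_one]
  · rfl

variable (g : Fˣ → Fˣ → ℂ) (a b : Fˣ)

lemma L_U : convD F (Uf F) g a b = ∑ c : Fˣ, g c b := by
  rw [convD, Fintype.sum_prod_type]
  simp only [Uf, ite_mul, zero_mul, one_mul, Finset.sum_ite_eq', Finset.mem_univ, if_true,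
    inv_one]
  exact Fintype.sum_equiv ((Equiv.inv Fˣ).trans (Equiv.mulRight a)) _ _ (fun x => rfl)

lemma L_V : convD F (Vf F) g a b = ∑ d : Fˣ, g a d := by
  rw [convD, Fintype.sum_prod_type_right]
  simp only [Vf, ite_mul, zero_mul, one_mul, Finset.sum_ite_eq', Finset.mem_univ, if_true,
    inv_one]
  exact Fintype.sum_equiv ((Equiv.inv Fˣ).trans (Equiv.mulRight b)) _ _ (fun x => rfl)

lemma L_P : convD F (Pf F ψ) g a b = ∑ c : Fˣ, ψ (c : F) * g (c⁻¹ * a) b := by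
  rw [convD, Fintype.sum_prod_type]
  simp only [Pf, ite_mul, zero_mul, Finset.sum_ite_eq', Finset.mem_univ, if_true, inv_one,
    one_mul]

lemma L_W : convD F (Wf F ψ) g a b = ∑ d : Fˣ, ψ (d : F) * g a (d⁻¹ * b) := by
  rw [convD, Fintype.sum_prod_type_right]
  simp only [Wf, ite_mul, zero_mul, Finset.sum_ite_eq', Finset.mem_univ, if_true, inv_one,
    one_mul]

lemma L_sigP : convD F (sigD F (Pf F ψ)) g a b =
    ∑ c : Fˣ, ψ ((c⁻¹ : Fˣ) : F) * g (c⁻¹ * a) b := by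
  rw [convD, Fintype.sum_prod_type]
  simp only [sigD, Pf, ite_mul, zero_mul, Finset.sum_ite_eq', Finset.mem_univ, if_true,
    inv_one, one_mul, mul_one]

lemma L_rhoW : convD F (rhoD F (Wf F ψ)) g a b =
    ∑ d : Fˣ, ψ ((d⁻¹ : Fˣ) : F) * g a (d⁻¹ * b) := by
  rw [convD, Fintype.sum_prod_type_right]
  simp only [rhoD, Wf, ite_mul, zero_mul, Finset.sum_ite_eq', Finset.mem_univ, if_true,
    inv_one, one_mul]

lemma L_sigV : convD F (sigD F (Vf F)) g a b = ∑ c : Fˣ, g (c⁻¹ * a) (c⁻¹ * b) := by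
  rw [convD, Fintype.sum_prod_type]
  simp only [sigD, Vf, inv_mul_eq_one, ite_mul, zero_mul, one_mul]
  simp only [Finset.sum_ite_eq, Finset.mem_univ, if_true]

lemma L_rhoU : convD F (rhoD F (Uf F)) g a b = ∑ c : Fˣ, g (c⁻¹ * a) (c⁻¹ * b) := by
  rw [convD, Fintype.sum_prod_type]
  simp only [rhoD, Uf, mul_inv_eq_one, ite_mul, zero_mul, one_mul]
  simp only [Finset.sum_ite_eq, Finset.mem_univ, if_true]

lemma L_rhoP : convD F (rhoD F (Pf F ψ)) g a b =
    ∑ c : Fˣ, ψ (c : F) * g (c⁻¹ * a) (c⁻¹ * b) := by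
  rw [convD, Fintype.sum_prod_type]
  simp only [rhoD, Pf, mul_inv_eq_one, ite_mul, zero_mul]
  simp only [Finset.sum_ite_eq, Finset.mem_univ, if_true]

lemma L_sigW : convD F (sigD F (Wf F ψ)) g a b =
    ∑ c : Fˣ, ψ (c : F) * g (c⁻¹ * a) (c⁻¹ * b) := by
  rw [convD, Fintype.sum_prod_type]
  simp only [sigD, Wf, inv_mul_eq_one, ite_mul, zero_mul]
  simp only [Finset.sum_ite_eq, Finset.mem_univ, if_true]

lemma L_dR : convD F (dRf F) g a b = g (-a) b := by
  rw [convD, Fintype.sum_prod_type]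
  simp only [dRf, ite_mul, zero_mul, one_mul, Finset.sum_ite_irrel, Finset.sum_const_zero]
  simp only [Finset.sum_ite_eq', Finset.mem_univ, if_true, inv_one, one_mul, inv_neg_one,
    neg_one_mul]

lemma L_dS : convD F (dSf F) g a b = g a (-b) := by
  rw [convD, Fintype.sum_prod_type]
  simp only [dSf, ite_mul, zero_mul, one_mul, Finset.sum_ite_irrel, Finset.sum_const_zero]
  simp only [Finset.sum_ite_eq', Finset.mem_univ, if_true, inv_one, one_mul, inv_neg_one,
    neg_one_mul]

end Eval
section Ident
variable {F : Type} [Field F] [Fintype F] [DecidableEq F]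
variable {ψ : F → ℂ} (hψadd : ∀ a b, ψ (a + b) = ψ a * ψ b)
  (hψne : ∀ a, ψ a ≠ 0) (hψnt : ∃ a, ψ a ≠ 1)

lemma E1 : convD F (Uf F) (convD F (Vf F) (Uf F)) =
    convD F (Vf F) (convD F (Uf F) (Vf F)) := by
  funext a b
  simp only [L_U, L_V, Uf, Vf, Finset.sum_ite_eq', Finset.mem_univ, if_true]

lemma EQ : convD F (dRf F) (convD F (sigD F (Pf F ψ)) (convD F (sigD F (Vf F)) (Pf F ψ))) =
    convD F (dSf F) (convD F (rhoD F (Wf F ψ)) (convD F (rhoD F (Uf F)) (Wf F ψ))) := by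
  funext a b
  simp only [L_dR, L_dS, L_sigP, L_rhoW, L_sigV, L_rhoU, L_P, L_W, Pf, Wf, ite_mul, mul_ite,
    zero_mul, mul_zero, Finset.sum_ite_eq, Finset.sum_ite_eq', Finset.mem_univ, if_true,
    inv_mul_eq_one, mul_inv_eq_one]
  refine Fintype.sum_equiv ((Equiv.mulLeft (a⁻¹ * b)).trans (Equiv.neg Fˣ)) _ _ (fun c => ?_)
  simp only [Equiv.trans_apply, Equiv.coe_mulLeft, Equiv.neg_apply]
  rw [mul_comm]
  refine congrArg₂ (fun u v : Fˣ => ψ (u : F) * ψ (v : F)) ?_ ?_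
  · simp [mul_inv_rev, inv_neg, mul_neg, neg_mul, neg_neg, mul_comm, mul_assoc, mul_left_comm]
  · simp [mul_inv_rev, inv_neg, mul_neg, neg_mul, neg_neg, mul_comm, mul_assoc, mul_left_comm]

include hψadd hψne hψnt in
lemma E2 : (fun a b => convD F (Pf F ψ) (convD F (Vf F) (Uf F)) a b
    + convD F (sigD F (Uf F)) (convD F (sigD F (Vf F)) (Pf F ψ)) a b
    + convD F (Uf F) (convD F (sigD F (Pf F ψ)) (convD F (sigD F (Vf F)) (Pf F ψ))) a b)
    = convD F (sigD F (Vf F)) (convD F (Pf F ψ) (Vf F)) := by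
  funext a b
  simp only [sig_U, L_U, L_V, L_P, L_sigP, L_sigV, Uf, Vf, Pf, ite_mul, mul_ite, zero_mul,
    mul_zero, mul_one, inv_mul_eq_one, Finset.sum_ite_eq, Finset.sum_ite_eq',
    Finset.mem_univ, if_true]
  have hs : ∑ c : Fˣ, ψ (c : F) = -1 := psi_sum hψadd hψne hψnt
  have h1 : ∀ u : Fˣ, (∑ x : Fˣ, ψ ((u * x : Fˣ) : F)) = -1 := fun u => by
    rw [sum_mulLeft u (fun c : Fˣ => ψ (c : F))]; exact hs
  have h2 : (∑ x : Fˣ, ψ ((x⁻¹ : Fˣ) : F)) = -1 := by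
    rw [sum_inv (fun c : Fˣ => ψ (c : F))]; exact hs
  have h3 : ∀ u : Fˣ, (∑ x : Fˣ, ψ ((x⁻¹ * u : Fˣ) : F)) = -1 := fun u => by
    rw [sum_inv_mulRight u (fun c : Fˣ => ψ (c : F))]; exact hs
  rw [Finset.sum_comm]
  have h4 : ∀ y : Fˣ, (∑ x : Fˣ, ψ ((y⁻¹ : Fˣ) : F) * ψ ((b⁻¹ * (y⁻¹ * x) : Fˣ) : F))
      = ψ ((y⁻¹ : Fˣ) : F) * (-1) := by
    intro y
    rw [← Finset.mul_sum]
    congr 1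
    simp only [← mul_assoc]
    exact h1 (b⁻¹ * y⁻¹)
  rw [Finset.sum_congr rfl (fun y _ => h4 y), ← Finset.sum_mul, h2, hs, h1 b⁻¹, h3 a]
  norm_num

include hψadd hψne hψnt in
lemma E3 : convD F (rhoD F (Uf F)) (convD F (Wf F ψ) (Uf F))
    = (fun a b => convD F (Wf F ψ) (convD F (Uf F) (Vf F)) a b
      + convD F (rhoD F (Vf F)) (convD F (rhoD F (Uf F)) (Wf F ψ)) a b
      + convD F (Vf F) (convD F (rhoD F (Wf F ψ)) (convD F (rhoD F (Uf F)) (Wf F ψ))) a b)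
    := by
  funext a b
  simp only [rho_V, L_U, L_V, L_W, L_rhoW, L_rhoU, Uf, Vf, Wf, ite_mul, mul_ite, zero_mul,
    mul_zero, mul_one, inv_mul_eq_one, Finset.sum_ite_eq, Finset.sum_ite_eq',
    Finset.mem_univ, if_true]
  have hs : ∑ c : Fˣ, ψ (c : F) = -1 := psi_sum hψadd hψne hψnt
  have h1 : ∀ u : Fˣ, (∑ x : Fˣ, ψ ((u * x : Fˣ) : F)) = -1 := fun u => by
    rw [sum_mulLeft u (fun c : Fˣ => ψ (c : F))]; exact hs
  have h2 : (∑ x : Fˣ, ψ ((x⁻¹ : Fˣ) : F)) = -1 := by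
    rw [sum_inv (fun c : Fˣ => ψ (c : F))]; exact hs
  have h3 : ∀ u : Fˣ, (∑ x : Fˣ, ψ ((x⁻¹ * u : Fˣ) : F)) = -1 := fun u => by
    rw [sum_inv_mulRight u (fun c : Fˣ => ψ (c : F))]; exact hs
  rw [Finset.sum_comm]
  have h4 : ∀ y : Fˣ, (∑ x : Fˣ, ψ ((y⁻¹ : Fˣ) : F) * ψ ((a⁻¹ * (y⁻¹ * x) : Fˣ) : F))
      = ψ ((y⁻¹ : Fˣ) : F) * (-1) := by
    intro y
    rw [← Finset.mul_sum]
    congr 1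
    simp only [← mul_assoc]
    exact h1 (a⁻¹ * y⁻¹)
  rw [Finset.sum_congr rfl (fun y _ => h4 y), ← Finset.sum_mul, h2, hs, h1 a⁻¹, h3 b]
  norm_num

lemma E4 : convD F (rhoD F (Pf F ψ)) (convD F (Wf F ψ) (Uf F))
    = convD F (rhoD F (sigD F (Vf F))) (convD F (rhoD F (Pf F ψ)) (Wf F ψ)) := by
  funext a b
  simp only [rho_sig_V, L_U, L_rhoP, L_W, Uf, Wf, ite_mul, mul_ite, zero_mul,
    mul_zero, mul_one, inv_mul_eq_one, Finset.sum_ite_eq, Finset.sum_ite_eq',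
    Finset.mem_univ, if_true]

lemma E5 : convD F (sigD F (rhoD F (Uf F))) (convD F (sigD F (Wf F ψ)) (Pf F ψ))
    = convD F (sigD F (Wf F ψ)) (convD F (Pf F ψ) (Vf F)) := by
  funext a b
  simp only [sig_rho_U, L_V, L_sigW, L_P, Pf, Vf, ite_mul, mul_ite, zero_mul,
    mul_zero, mul_one, inv_mul_eq_one, Finset.sum_ite_eq, Finset.sum_ite_eq',
    Finset.mem_univ, if_true]

lemma E6 : convD F (sigD F (rhoD F (Pf F ψ))) (convD F (sigD F (Wf F ψ)) (Pf F ψ))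
    = convD F (rhoD F (sigD F (Wf F ψ))) (convD F (rhoD F (Pf F ψ)) (Wf F ψ)) := by
  funext a b
  simp only [sig_rho_P, rho_sig_W, L_W, L_P, L_sigW, L_rhoP, Pf, Wf, ite_mul, mul_ite,
    zero_mul, mul_zero, mul_one, inv_mul_eq_one, Finset.sum_ite_eq, Finset.sum_ite_eq',
    Finset.mem_univ, if_true]
  refine (Fintype.sum_equiv ((Equiv.mulLeft a⁻¹).trans (Equiv.mulRight b)) _ _ (fun c => ?_)).symm
  simp only [Equiv.trans_apply, Equiv.coe_mulLeft, Equiv.coe_mulRight]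
  have k1 : (a⁻¹ * c * b)⁻¹ * b = c⁻¹ * a := by
    simp [mul_inv_rev, mul_comm, mul_assoc, mul_left_comm]
  have k2 : ((a⁻¹ * c * b)⁻¹ * b)⁻¹ * a = c := by
    rw [k1]; simp [mul_inv_rev, mul_comm, mul_assoc, mul_left_comm]
  rw [k2, k1]
  have k3 : (c⁻¹ * a)⁻¹ * b = a⁻¹ * c * b := by
    simp [mul_inv_rev, mul_comm, mul_assoc, mul_left_comm]
  rw [k3]
  ring

end Ident
section Assemble
variable {n : ℕ} {F : Type} [Field F] [Fintype F] [DecidableEq F]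
variable {i j : Fin n} {ψ : F → ℂ}

lemma TfD_split3 (f g h : Fˣ → Fˣ → ℂ) :
    TfD n F i j (fun a b => f a b + g a b + h a b) =
      TfD n F i j f + TfD n F i j g + TfD n F i j h := by
  rw [TfD, TfD, TfD, TfD, ← Finset.sum_add_distrib, ← Finset.sum_add_distrib]
  exact Finset.sum_congr rfl fun p _ => by rw [add_smul, add_smul]

lemma keyXYX (hij : (j : ℕ) = (i : ℕ) + 1) (hψadd : ∀ a b, ψ (a + b) = ψ a * ψ b)
    (hψne : ∀ a, ψ a ≠ 0) (hψnt : ∃ a, ψ a ≠ 1) :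
    (TfD n F i j (Uf F) + yokR n F i * TfD n F i j (Pf F ψ)) *
      ((TfD n F i j (Vf F) + yokR n F j * TfD n F i j (Wf F ψ)) *
        (TfD n F i j (Uf F) + yokR n F i * TfD n F i j (Pf F ψ))) =
    (TfD n F i j (Vf F) + yokR n F j * TfD n F i j (Wf F ψ)) *
      ((TfD n F i j (Uf F) + yokR n F i * TfD n F i j (Pf F ψ)) *
        (TfD n F i j (Vf F) + yokR n F j * TfD n F i j (Wf F ψ))) := by
  simp only [mul_add, add_mul, mul_assoc, TfTz hij, TfRz hij, TfSz hij, Tf_mul hij,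
    Tf_R hij, Tf_S hij, RRz hij, SSz hij, braidz hij, smul_mul_assoc, mul_smul_comm]
  rw [E1, EQ, E4, E5, E6, E3 hψadd hψne hψnt, ← E2 hψadd hψne hψnt]
  rw [TfD_split3, TfD_split3]
  simp only [mul_add]
  abel

end Assemble
section Far
variable {n : ℕ} {F : Type} [Field F] [Fintype F] [DecidableEq F]

lemma sAct_hElem_far {i j : Fin n} (h1 : j.castSucc ≠ i.castSucc) (h2 : j.castSucc ≠ i.succ)
    (h3 : j.succ ≠ i.castSucc) (h4 : j.succ ≠ i.succ) (r : Fˣ) :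
    sAct j (hElem i r : TGrp n F) = hElem i r := by
  apply Subtype.ext
  funext k
  show (hElem i r : TGrp n F).1 (Equiv.swap j.castSucc j.succ k) = (hElem i r : TGrp n F).1 k
  rcases eq_or_ne k j.castSucc with hk | hk
  · subst hk
    rw [Equiv.swap_apply_left, hElem_apply, hElem_apply]
    simp [h1, h2, h3, h4]
  · rcases eq_or_ne k j.succ with hk2 | hk2
    · subst hk2
      rw [Equiv.swap_apply_right, hElem_apply, hElem_apply]
      simp [h1, h2, h3, h4]
    · rw [Equiv.swap_apply_of_ne_of_ne hk hk2]

lemma yok_commute_far {i j : Fin n} (hd : 2 ≤ Nat.dist (i : ℕ) (j : ℕ)) (ψ : F → ℂ) :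
    yokL n F ψ i * yokL n F ψ j = yokL n F ψ j * yokL n F ψ i := by
  have hv : (i : ℕ) + 2 ≤ (j : ℕ) ∨ (j : ℕ) + 2 ≤ (i : ℕ) := by
    simp [Nat.dist] at hd; omega
  have c2 : ∀ r : Fˣ, sAct j (hElem i r : TGrp n F) = hElem i r := by
    intro r
    refine sAct_hElem_far ?_ ?_ ?_ ?_ r <;>
      (apply Fin.ne_of_val_ne; simp; omega)
  have c3 : ∀ r : Fˣ, sAct i (hElem j r : TGrp n F) = hElem j r := by
    intro r
    refine sAct_hElem_far ?_ ?_ ?_ ?_ r <;>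
      (apply Fin.ne_of_val_ne; simp; omega)
  have hTR : ∀ r : Fˣ, Commute (yokT n F (hElem i r)) (yokR n F j) := fun r => by
    unfold Commute SemiconjBy
    rw [yokT_R, c2]
  have hTS : ∀ r : Fˣ, Commute (yokR n F i) (yokT n F (hElem j r)) := fun r => by
    unfold Commute SemiconjBy
    rw [yokT_R, c3]
  have hRR : Commute (yokR n F i) (yokR n F j) := yokR_comm hd
  have hTT : ∀ r s : Fˣ, Commute (yokT n F (hElem i r)) (yokT n F (hElem j s)) :=
    fun r s => yokT_comm _ _
  set Ai := yokE n F i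
  set Aj := yokE n F j
  set Pi := ∑ r : Fˣ, ψ (r : F) • yokT n F (hElem i r) with hPi
  set Pj := ∑ r : Fˣ, ψ (r : F) • yokT n F (hElem j r) with hPj
  have cAA : Commute Ai Aj :=
    Commute.sum_left _ _ _ fun r _ =>
      Commute.sum_right _ _ _ fun s _ => hTT r s
  have cAR : Commute Ai (yokR n F j) := Commute.sum_left _ _ _ fun r _ => hTR r
  have cAPj : Commute Ai Pj := Commute.sum_right _ _ _ fun s _ =>
    ((Commute.sum_left _ _ _ fun r _ => hTT r s).smul_right _)
  have cRA : Commute (yokR n F i) Aj := Commute.sum_right _ _ _ fun s _ => hTS s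
  have cRPj : Commute (yokR n F i) Pj := Commute.sum_right _ _ _ fun s _ =>
    (hTS s).smul_right _
  have cPiA : Commute Pi Aj := Commute.sum_left _ _ _ fun r _ =>
    ((Commute.sum_right _ _ _ fun s _ => hTT r s).smul_left _)
  have cPiR : Commute Pi (yokR n F j) := Commute.sum_left _ _ _ fun r _ =>
    (hTR r).smul_left _
  have cPiPj : Commute Pi Pj := Commute.sum_left _ _ _ fun r _ =>
    ((Commute.sum_right _ _ _ fun s _ => (hTT r s).smul_right _).smul_left _)
  have cX : Commute (Ai + yokR n F i * Pi) (Aj + yokR n F j * Pj) := by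
    refine Commute.add_left (Commute.add_right cAA (Commute.mul_right cAR cAPj)) ?_
    refine Commute.add_right (Commute.mul_left cRA cPiA) ?_
    exact Commute.mul_left (Commute.mul_right hRR cRPj) (Commute.mul_right cPiR cPiPj)
  have := (cX.smul_left ((Fintype.card F : ℂ)⁻¹)).smul_right ((Fintype.card F : ℂ)⁻¹)
  exact this.eq

end Far
section Final
variable {n : ℕ} {F : Type} [Field F] [Fintype F] [DecidableEq F] {ψ : F → ℂ}

lemma yokL_eq_X (i j : Fin n) :
    yokL n F ψ i = (Fintype.card F : ℂ)⁻¹ •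
      (TfD n F i j (Uf F) + yokR n F i * TfD n F i j (Pf F ψ)) := by
  rw [yokL, TfU, TfP]

lemma yokL_eq_Y (i j : Fin n) :
    yokL n F ψ j = (Fintype.card F : ℂ)⁻¹ •
      (TfD n F i j (Vf F) + yokR n F j * TfD n F i j (Wf F ψ)) := by
  rw [yokL, TfV, TfW]

lemma braid_adj {i j : Fin n} (hij : (j : ℕ) = (i : ℕ) + 1)
    (hψadd : ∀ a b, ψ (a + b) = ψ a * ψ b)
    (hψne : ∀ a, ψ a ≠ 0) (hψnt : ∃ a, ψ a ≠ 1) :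
    yokL n F ψ i * yokL n F ψ j * yokL n F ψ i =
      yokL n F ψ j * yokL n F ψ i * yokL n F ψ j := by
  rw [yokL_eq_X i j, yokL_eq_Y i j]
  simp only [smul_mul_assoc, mul_smul_comm, mul_assoc]
  rw [keyXYX hij hψadd hψne hψnt]

end Final

/-- In the Yokonuma–Hecke algebra, Juyumaya's generators `L_i`
satisfy the braid relations. -/
theorem juyumaya_braid_relations (n : ℕ) (hn : 1 ≤ n)
    (F : Type) [Field F] [Fintype F] [DecidableEq F]
    (ψ : F → ℂ) (hψadd : ∀ a b, ψ (a + b) = ψ a * ψ b)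
    (hψne : ∀ a, ψ a ≠ 0) (hψnt : ∃ a, ψ a ≠ 1)
    (i j : Fin n) :
    (Nat.dist i j = 1 →
      yokL n F ψ i * yokL n F ψ j * yokL n F ψ i =
        yokL n F ψ j * yokL n F ψ i * yokL n F ψ j) ∧
    (2 ≤ Nat.dist i j →
      yokL n F ψ i * yokL n F ψ j = yokL n F ψ j * yokL n F ψ i) := by
  constructor
  · intro hd
    have h : (j : ℕ) = (i : ℕ) + 1 ∨ (i : ℕ) = (j : ℕ) + 1 := by
      simp [Nat.dist] at hd; omega
    rcases h with hij | hji
    · exact braid_adj hij hψadd hψne hψnt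
    · exact (braid_adj hji hψadd hψne hψnt).symm
  · intro hd
    exact yok_commute_far hd ψ
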